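/- Let K be a field of characteristic p > 2 containing a finite field K' of order q = p^s, let I ⊆ K[x₀,x₁,x₂] be the radical ideal of all K'-points of P²(K') except q₀ = [0:1:0], and let r = (q+1)/2. Then I^{(2r-1)} = I^{(q)} is not contained in I^r, where I^{(m)} denotes the m-th symbolic power (the intersection over the points π ≠ q₀ of I_π^m). -/

import Mathlib

open MvPolynomial Finset

section AuxLemmas

/-- Sum of `t^i` over a finite field. -/
lemma sum_pow_ff (F : Type*) [Field F] [Fintype F] (i : ℕ) :
    ∑ t : F, t ^ i = if i ≠ 0 ∧ (Fintype.card F - 1 ∣ i) then (-1 : F) else 0 := by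
  classical
  by_cases hi : i = 0
  · subst hi
    simp [FiniteField.cast_card_eq_zero]
  · have h0 : ∑ t : F, t ^ i = ∑ t : Fˣ, (t : F) ^ i := by
      let φ : Fˣ ↪ F := ⟨fun x ↦ x, fun _ _ h => Units.ext h⟩
      have huniv : (univ : Finset Fˣ).map φ = univ \ {0} := by
        ext x
        simp only [mem_map, mem_univ, Function.Embedding.coeFn_mk, true_and, mem_sdiff,
          mem_singleton, φ]
        exact isUnit_iff_ne_zero
      calc ∑ t : F, t ^ i = ∑ t ∈ univ \ {(0 : F)}, t ^ i := by
            rw [← Finset.sum_sdiff (Finset.subset_univ {0}), Finset.sum_singleton,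
              zero_pow hi, add_zero]
        _ = ∑ t : Fˣ, (t : F) ^ i := by rw [← huniv, Finset.sum_map]; rfl
    rw [h0]
    have := FiniteField.sum_pow_units F i
    rw [this]
    simp [hi]

lemma sum_pow_coe {K : Type} [Field K] (K' : Subfield K) [Fintype K'] (i : ℕ) :
    ∑ t : K', (t : K) ^ i = if i ≠ 0 ∧ (Fintype.card K' - 1 ∣ i) then (-1 : K) else 0 := by
  have : ∑ t : K', (t : K) ^ i = ((∑ t : K', t ^ i : K') : K) := by
    push_cast; rfl
  rw [this, sum_pow_ff]
  split_ifs <;> simp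


lemma deg_single (i : Fin 3) (k : ℕ) : (Finsupp.single i k).degree = k := by
  classical
  rcases eq_or_ne k 0 with rfl | hk
  · simp [Finsupp.degree]
  · rw [Finsupp.degree_apply, Finsupp.support_single_ne_zero _ hk, Finset.sum_singleton,
      Finsupp.single_eq_same]

lemma mem_support_degree {K : Type} [Field K] {f : MvPolynomial (Fin 3) K} {d : ℕ}
    (hf : f.IsHomogeneous d) {m : Fin 3 →₀ ℕ} (hm : m ∈ f.support) :
    m.degree = d := by
  rw [Finsupp.degree_eq_weight_one]
  exact hf (mem_support_iff.mp hm)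

lemma eval_axis {K : Type} [Field K] {f : MvPolynomial (Fin 3) K} {d : ℕ}
    (hf : f.IsHomogeneous d) (t : K) :
    eval (fun i : Fin 3 => if i = 1 then t else 0) f
      = coeff (Finsupp.single 1 d) f * t ^ d := by
  classical
  rw [eval_eq]
  rw [Finset.sum_eq_single (Finsupp.single 1 d)]
  · rcases eq_or_ne d 0 with rfl | hd
    · simp
    · rw [Finsupp.support_single_ne_zero _ hd, Finset.prod_singleton,
        Finsupp.single_eq_same, if_pos rfl]
  · intro m hm hne
    have : ∃ i ∈ m.support, i ≠ 1 := by
      by_contra hcon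
      push_neg at hcon
      have hm1 : m = Finsupp.single 1 (m 1) := by
        ext i
        rcases eq_or_ne i 1 with rfl | hi
        · simp
        · rw [Finsupp.single_eq_of_ne' (Ne.symm hi)]
          by_contra h0
          exact hi (hcon i (Finsupp.mem_support_iff.mpr h0))
      have hdeg := mem_support_degree hf hm
      rw [hm1, deg_single] at hdeg
      rw [hm1, hdeg] at hne
      exact hne rfl
    obtain ⟨i, hi, hi1⟩ := this
    refine mul_eq_zero_of_right _ (Finset.prod_eq_zero hi ?_)
    rw [if_neg hi1, zero_pow (Finsupp.mem_support_iff.mp hi)]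
  · intro h
    rw [notMem_support_iff.mp h, zero_mul]


lemma coeff_single_ne {K : Type} [Field K] {h : MvPolynomial (Fin 3) K} {d : ℕ}
    (hh : h.IsHomogeneous d) {k : ℕ} (hk : k ≠ d) :
    coeff (Finsupp.single 1 k) h = 0 :=
  hh.coeff_eq_zero (by rw [deg_single]; exact hk)

lemma coeff_single_mul {K : Type} [Field K] (f g : MvPolynomial (Fin 3) K) (k : ℕ) :
    coeff (Finsupp.single 1 k) (f * g)
      = ∑ ij ∈ Finset.HasAntidiagonal.antidiagonal k,
          coeff (Finsupp.single 1 ij.1) f * coeff (Finsupp.single 1 ij.2) g := by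
  rw [coeff_mul, Finsupp.antidiagonal_single, Finset.sum_map]
  rfl


lemma expand_sum {K : Type} [Field K] (K' : Subfield K) [Fintype K']
    (h : MvPolynomial (Fin 3) K) :
    ∑ a : K', ∑ b : K', ∑ c : K', eval ![(a:K),(b:K),(c:K)] h
      = ∑ m ∈ h.support, coeff m h *
          ((∑ t : K', (t:K) ^ m 0) * ((∑ t : K', (t:K) ^ m 1) * (∑ t : K', (t:K) ^ m 2))) := by
  have e1 : ∀ a b c : K, eval ![a,b,c] h
      = ∑ m ∈ h.support, coeff m h * (a ^ m 0 * (b ^ m 1 * c ^ m 2)) := by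
    intro a b c
    rw [eval_eq']
    refine Finset.sum_congr rfl fun m _ => ?_
    rw [Fin.prod_univ_three]
    simp [mul_assoc]
  simp only [e1]
  calc
    ∑ a : K', ∑ b : K', ∑ c : K', ∑ m ∈ h.support,
        coeff m h * ((a:K) ^ m 0 * ((b:K) ^ m 1 * (c:K) ^ m 2))
      = ∑ a : K', ∑ b : K', ∑ m ∈ h.support, ∑ c : K',
          coeff m h * ((a:K) ^ m 0 * ((b:K) ^ m 1 * (c:K) ^ m 2)) := by
        refine Finset.sum_congr rfl fun a _ => Finset.sum_congr rfl fun b _ => ?_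
        exact Finset.sum_comm
    _ = ∑ a : K', ∑ m ∈ h.support, ∑ b : K', ∑ c : K',
          coeff m h * ((a:K) ^ m 0 * ((b:K) ^ m 1 * (c:K) ^ m 2)) := by
        refine Finset.sum_congr rfl fun a _ => ?_
        exact Finset.sum_comm
    _ = ∑ m ∈ h.support, ∑ a : K', ∑ b : K', ∑ c : K',
          coeff m h * ((a:K) ^ m 0 * ((b:K) ^ m 1 * (c:K) ^ m 2)) := Finset.sum_comm
    _ = ∑ m ∈ h.support, coeff m h *
          ((∑ t : K', (t:K) ^ m 0) * ((∑ t : K', (t:K) ^ m 1) * (∑ t : K', (t:K) ^ m 2))) := by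
        refine Finset.sum_congr rfl fun m _ => ?_
        simp only [← Finset.mul_sum, ← Finset.sum_mul]










lemma degree_fin3 (m : Fin 3 →₀ ℕ) : m.degree = m 0 + m 1 + m 2 := by
  classical
  rw [Finsupp.degree, ← Fin.sum_univ_three (fun i => m i)]
  refine Finset.sum_subset (Finset.subset_univ _) fun i _ hi => ?_
  exact Finsupp.notMem_support_iff.mp hi

lemma key_vanish {K : Type} [Field K] (K' : Subfield K) [Fintype K']
    (hq3 : 3 ≤ Fintype.card K') {f : MvPolynomial (Fin 3) K} {d : ℕ}
    (hf : f.IsHomogeneous d) (hd : d ≤ 2 * Fintype.card K' - 2)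
    (hvan : ∀ v : Fin 3 → K', (v 0 ≠ 0 ∨ v 2 ≠ 0) →
      eval (fun i => (v i : K)) f = 0) :
    coeff (Finsupp.single 1 d) f = 0 := by
  classical
  set q := Fintype.card K' with hq
  set e := 2 * q - 2 - d with he
  set g := (X 1 : MvPolynomial (Fin 3) K) ^ e * f with hgdef
  have hed : e + d = 2 * q - 2 := by omega
  have hg : g.IsHomogeneous (2 * q - 2) := by
    rw [← hed]; exact (isHomogeneous_X_pow 1 e).mul hf
  -- the evaluation of g at K'-points off the y-axis vanishes
  have hgvan : ∀ a b c : K', (a ≠ 0 ∨ c ≠ 0) → eval ![(a:K),(b:K),(c:K)] g = 0 := by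
    intro a b c hac
    have h0 : eval ![(a:K),(b:K),(c:K)] f = 0 := by
      have := hvan ![a, b, c] (by simpa using hac)
      have hfun : (fun i => ((![a,b,c] : Fin 3 → K') i : K)) = ![(a:K),(b:K),(c:K)] := by
        funext i; fin_cases i <;> simp
      rwa [hfun] at this
    rw [hgdef, map_mul, h0, mul_zero]
  -- compute the big sum in two ways
  have way2 : ∑ a : K', ∑ b : K', ∑ c : K', eval ![(a:K),(b:K),(c:K)] g = 0 := by
    rw [expand_sum]
    refine Finset.sum_eq_zero fun m hm => ?_
    have hdeg : m 0 + m 1 + m 2 = 2 * q - 2 := by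
      rw [← degree_fin3]; exact mem_support_degree hg hm
    have hdvd : ∀ k : ℕ, (k = 0 ∨ ¬ ((q - 1) ∣ k)) → ∑ t : K', (t:K) ^ k = 0 := by
      intro k hk
      rw [sum_pow_coe, if_neg]; tauto
    have hcases : (m 0 = 0 ∨ ¬ ((q-1) ∣ m 0)) ∨ (m 1 = 0 ∨ ¬ ((q-1) ∣ m 1))
        ∨ (m 2 = 0 ∨ ¬ ((q-1) ∣ m 2)) := by
      by_contra hcon
      push_neg at hcon
      obtain ⟨⟨h0, h0d⟩, ⟨h1, h1d⟩, ⟨h2, h2d⟩⟩ := hcon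
      have l0 : q - 1 ≤ m 0 := Nat.le_of_dvd (Nat.pos_of_ne_zero h0) h0d
      have l1 : q - 1 ≤ m 1 := Nat.le_of_dvd (Nat.pos_of_ne_zero h1) h1d
      have l2 : q - 1 ≤ m 2 := Nat.le_of_dvd (Nat.pos_of_ne_zero h2) h2d
      omega
    rcases hcases with h | h | h <;> rw [hdvd _ h] <;> ring
  have way1 : ∑ a : K', ∑ b : K', ∑ c : K', eval ![(a:K),(b:K),(c:K)] g
      = - coeff (Finsupp.single 1 (2 * q - 2)) g := by
    rw [Finset.sum_eq_single (0 : K')]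
    · rw [Finset.sum_comm]
      rw [Finset.sum_eq_single (0 : K')]
      · have : ∀ b : K', eval ![((0:K'):K),(b:K),((0:K'):K)] g
            = coeff (Finsupp.single 1 (2 * q - 2)) g * (b:K) ^ (2 * q - 2) := by
          intro b
          have hfun : (![((0:K'):K),(b:K),((0:K'):K)] : Fin 3 → K)
              = fun i => if i = 1 then (b:K) else 0 := by
            funext i; fin_cases i <;> simp
          rw [hfun, eval_axis hg]
        simp only [this]
        rw [← Finset.mul_sum, sum_pow_coe, if_pos ⟨by omega, ⟨2, by omega⟩⟩, mul_neg, mul_one]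
      · intro c _ hc
        exact Finset.sum_eq_zero fun b _ => hgvan 0 b c (Or.inr hc)
      · intro h; exact absurd (Finset.mem_univ _) h
    · intro a _ ha
      exact Finset.sum_eq_zero fun b _ => Finset.sum_eq_zero fun c _ => hgvan a b c (Or.inl ha)
    · intro h; exact absurd (Finset.mem_univ _) h
  have hcoeffg : coeff (Finsupp.single 1 (2 * q - 2)) g = 0 := by
    have := way1.symm.trans way2
    exact neg_eq_zero.mp this
  -- transfer to f
  have : coeff (Finsupp.single 1 (2 * q - 2)) g = coeff (Finsupp.single 1 d) f := by
    rw [hgdef, X_pow_eq_monomial, ← hed, Finsupp.single_add, coeff_monomial_mul, one_mul]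
  rwa [this] at hcoeffg






lemma pow_coeff_zero {K : Type} [Field K] (H : Set (MvPolynomial (Fin 3) K)) (D : ℕ)
    (hH : ∀ h ∈ H, ∃ d, h.IsHomogeneous d ∧
      (D ≤ d ∨ ∀ k, coeff (Finsupp.single 1 k) h = 0)) :
    ∀ n : ℕ, ∀ x ∈ (Ideal.span H) ^ n, ∀ c : MvPolynomial (Fin 3) K, ∀ k : ℕ,
      k < n * D → coeff (Finsupp.single 1 k) (c * x) = 0 := by
  intro n
  induction n with
  | zero => intro x _ c k hk; omega
  | succ n ih =>
    intro x hx
    rw [pow_succ] at hx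
    refine Submodule.mul_induction_on (C := fun x => ∀ c : MvPolynomial (Fin 3) K, ∀ k : ℕ,
        k < (n+1) * D → coeff (Finsupp.single 1 k) (c * x) = 0) hx ?_ ?_
    · intro a ha b hb
      induction hb using Submodule.span_induction with
      | mem h hmem =>
        intro c k hk
        obtain ⟨d, hdhom, hcase⟩ := hH h hmem
        rcases hcase with hDd | hzero
        · -- high degree case
          have : c * (a * h) = (c * h) * a := by ring
          rw [this, coeff_single_mul]
          refine Finset.sum_eq_zero fun ij hij => ?_
          have hij' : ij.1 + ij.2 = k := Finset.HasAntidiagonal.mem_antidiagonal.mp hij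
          have hnD : (n+1) * D = n * D + D := by ring
          by_cases hj : ij.2 < n * D
          · have := ih a ha 1 ij.2 hj
            rw [one_mul] at this
            rw [this, mul_zero]
          · have hi : ij.1 < D := by omega
            have : coeff (Finsupp.single 1 ij.1) (c * h) = 0 := by
              rw [coeff_single_mul]
              refine Finset.sum_eq_zero fun uv huv => ?_
              have huv' : uv.1 + uv.2 = ij.1 := Finset.HasAntidiagonal.mem_antidiagonal.mp huv
              have : uv.2 ≠ d := by omega
              rw [coeff_single_ne hdhom this, mul_zero]
            rw [this, zero_mul]
        · -- all y-coefficients of h vanish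
          have : c * (a * h) = (c * a) * h := by ring
          rw [this, coeff_single_mul]
          refine Finset.sum_eq_zero fun ij _ => by rw [hzero ij.2, mul_zero]
      | zero => intro c k hk; simp
      | add y z _ _ hy hz =>
        intro c k hk
        rw [mul_add, mul_add, coeff_add, hy c k hk, hz c k hk, add_zero]
      | smul r y _ hy =>
        intro c k hk
        have : c * (a * (r • y)) = (c * r) * (a * y) := by
          rw [smul_eq_mul]; ring
        rw [this]
        exact hy (c * r) k hk
    · intro x y hx' hy' c k hk
      rw [mul_add, coeff_add, hx' c k hk, hy' c k hk, add_zero]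


end AuxLemmas


/-- The homogeneous ideal of a point of projective space (given by a
representative `π`). -/
noncomputable def pointIdeal {K : Type} [Field K] {n : ℕ} (π : Fin n → K) :
    Ideal (MvPolynomial (Fin n) K) :=
  Ideal.span {f | (∃ d, f.IsHomogeneous d) ∧ eval π f = 0}

attribute [local instance] MvPolynomial.gradedAlgebra

lemma pointIdeal_le_ker {K : Type} [Field K] (π : Fin 3 → K) :
    pointIdeal π ≤ RingHom.ker (eval π) := by
  rw [pointIdeal, Ideal.span_le]
  intro f hf
  exact hf.2

lemma iInf_le_spanH {K : Type} [Field K] (S : Set (Fin 3 → K)) :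
    (⨅ π ∈ S, pointIdeal π) ≤
      Ideal.span {f : MvPolynomial (Fin 3) K |
        (∃ d, f.IsHomogeneous d) ∧ ∀ π ∈ S, eval π f = 0} := by
  classical
  set 𝒜 := homogeneousSubmodule (Fin 3) K
  have hIh : (⨅ π ∈ S, pointIdeal π).IsHomogeneous 𝒜 := by
    refine Ideal.IsHomogeneous.iInf₂ fun π _ => ?_
    exact Ideal.homogeneous_span 𝒜 _ fun x hx => by
      obtain ⟨⟨d, hd⟩, _⟩ := hx
      exact ⟨d, (mem_homogeneousSubmodule _ _).mpr hd⟩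
  intro f hf
  have hdec : ∀ i : ℕ, (DirectSum.decompose 𝒜 f i : MvPolynomial (Fin 3) K)
      = homogeneousComponent i f := fun i =>
    MvPolynomial.decomposition.decompose'_apply f i
  rw [← sum_homogeneousComponent f]
  refine Ideal.sum_mem _ fun i _ => ?_
  have hmemI : homogeneousComponent i f ∈ ⨅ π ∈ S, pointIdeal π := by
    rw [← hdec i]; exact hIh i hf
  refine Ideal.subset_span ⟨⟨i, homogeneousComponent_isHomogeneous i f⟩, fun π hπ => ?_⟩
  have h1 : homogeneousComponent i f ∈ pointIdeal π := by
    have := Ideal.mem_iInf.mp hmemI π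
    exact Ideal.mem_iInf.mp this hπ
  exact pointIdeal_le_ker π h1

lemma ideal_pow_mono {R : Type*} [CommRing R] {I J : Ideal R} (h : I ≤ J) (n : ℕ) :
    I ^ n ≤ J ^ n := by
  induction n with
  | zero => simp
  | succ n ih => rw [pow_succ, pow_succ]; exact Ideal.mul_mono ih h

theorem stmt8 (p s r : ℕ) (hp : p.Prime) (hp2 : 2 < p) (hs : 1 ≤ s)
    (hr : 2 * r = p ^ s + 1)
    (K : Type) [Field K] [CharP K p] (K' : Subfield K) [Fintype K']
    (hcard : Fintype.card K' = p ^ s) :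
    let q0 : Fin 3 → K := fun i => if i = 1 then 1 else 0
    let S : Set (Fin 3 → K) :=
      {π | π ≠ 0 ∧ (∀ i, π i ∈ K') ∧ ¬∃ c : K, π = c • q0}
    let I : Ideal (MvPolynomial (Fin 3) K) := ⨅ π ∈ S, pointIdeal π
    -- I^{(2r-1)} = I^{(q)} ⊄ I^r, where I^{(m)} = ⨅_π (pointIdeal π)^m
    ¬ (⨅ π ∈ S, (pointIdeal π) ^ (p ^ s)) ≤ I ^ r := by
  intro q0 S I hle
  classical
  set q := p ^ s with hqdef
  have hq : Fintype.card K' = q := hcard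
  have hq3 : 3 ≤ q := le_trans hp2 (Nat.le_self_pow (by omega) p)
  -- the witness polynomial: product of all q² lines avoiding q0
  set L : K' × K' → MvPolynomial (Fin 3) K :=
    fun w => C (w.1 : K) * X 0 + X 1 + C (w.2 : K) * X 2 with hLdef
  set G : MvPolynomial (Fin 3) K := ∏ w : K' × K', L w with hGdef
  have hLhom : ∀ w : K' × K', (L w).IsHomogeneous 1 := fun w =>
    ((isHomogeneous_C_mul_X _ 0).add (isHomogeneous_X _ 1)).add (isHomogeneous_C_mul_X _ 2)
  have hGhom : G.IsHomogeneous (q * q) := by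
    have h1 := IsHomogeneous.prod univ L (fun _ => 1) (fun w _ => hLhom w)
    have h2 : ∑ _w : K' × K', 1 = q * q := by
      rw [Finset.sum_const, smul_eq_mul, mul_one, Finset.card_univ, Fintype.card_prod, hq]
    rwa [h2] at h1
  have hGq0 : eval q0 G = 1 := by
    rw [hGdef, map_prod]
    refine Finset.prod_eq_one fun w _ => ?_
    simp [hLdef, q0]
  have hGcoeff : coeff (Finsupp.single 1 (q * q)) G = 1 := by
    have := eval_axis hGhom (1 : K)
    rw [one_pow, mul_one] at this
    rw [← this]
    exact hGq0
  -- G lies in the intersection of the q-th powers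
  have hGmem : G ∈ ⨅ π ∈ S, (pointIdeal π) ^ q := by
    rw [Ideal.mem_iInf]
    intro π
    rw [Ideal.mem_iInf]
    intro hπ
    obtain ⟨hπ0, hπK, hπq0⟩ := hπ
    set a : K' := ⟨π 0, hπK 0⟩ with ha
    set b : K' := ⟨π 1, hπK 1⟩ with hb
    set cc : K' := ⟨π 2, hπK 2⟩ with hcc
    have hac : a ≠ 0 ∨ cc ≠ 0 := by
      by_contra hcon
      push_neg at hcon
      obtain ⟨h0, h2⟩ := hcon
      have hπ00 : π 0 = 0 := by rw [show π 0 = (a : K) from rfl, h0]; rfl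
      have hπ22 : π 2 = 0 := by rw [show π 2 = (cc : K) from rfl, h2]; rfl
      refine hπq0 ⟨π 1, ?_⟩
      funext i
      fin_cases i <;> simp [q0, hπ00, hπ22]
    set T : Finset (K' × K') :=
      univ.filter (fun w : K' × K' => w.1 * a + b + w.2 * cc = 0) with hT
    have hTcard : T.card = q := by
      rcases hac with hane | hcne
      · rw [← hq, ← Finset.card_univ (α := K')]
        refine Finset.card_bij' (fun w _ => w.2)
          (fun γ _ => ((-(b : K') - γ * cc) / a, γ)) ?_ ?_ ?_ ?_
        · intro w hw; exact Finset.mem_univ _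
        · intro γ _
          rw [hT, Finset.mem_filter]
          refine ⟨Finset.mem_univ _, ?_⟩
          field_simp
          ring
        · intro w hw
          rw [hT, Finset.mem_filter] at hw
          have heq := hw.2
          have : w.1 = (-(b : K') - w.2 * cc) / a := by
            field_simp
            linear_combination heq
          exact Prod.ext this.symm rfl
        · intro γ _; rfl
      · rw [← hq, ← Finset.card_univ (α := K')]
        refine Finset.card_bij' (fun w _ => w.1)
          (fun α _ => (α, (-(b : K') - α * a) / cc)) ?_ ?_ ?_ ?_
        · intro w hw; exact Finset.mem_univ _
        · intro α _
          rw [hT, Finset.mem_filter]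
          refine ⟨Finset.mem_univ _, ?_⟩
          field_simp
          ring
        · intro w hw
          rw [hT, Finset.mem_filter] at hw
          have heq := hw.2
          have : w.2 = (-(b : K') - w.1 * a) / cc := by
            field_simp
            linear_combination heq
          exact Prod.ext rfl this.symm
        · intro α _; rfl
    have hTmem : ∀ w ∈ T, L w ∈ pointIdeal π := by
      intro w hw
      rw [hT, Finset.mem_filter] at hw
      refine Ideal.subset_span ⟨⟨1, hLhom w⟩, ?_⟩
      have : (w.1 : K) * π 0 + π 1 + (w.2 : K) * π 2 = 0 := by
        have := congrArg (Subfield.subtype K') hw.2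
        push_cast at this
        convert this using 2 <;> rfl
      simp [hLdef, this]
    have h1 := Ideal.prod_mem_prod (I := fun _ : K' × K' => pointIdeal π) hTmem
    rw [Finset.prod_const, hTcard] at h1
    have hsplit : (∏ w ∈ T, L w) *
        (∏ w ∈ univ.filter (fun w => ¬ (w.1 * a + b + w.2 * cc = 0)), L w) = G := by
      rw [hGdef, hT]
      exact Finset.prod_filter_mul_prod_filter_not univ _ L
    rw [← hsplit]
    exact Ideal.mul_mem_right _ _ h1
  -- now the non-membership
  have hGIr : G ∈ I ^ r := hle hGmem
  set H : Set (MvPolynomial (Fin 3) K) :=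
    {f | (∃ d, f.IsHomogeneous d) ∧ ∀ π ∈ S, eval π f = 0} with hH
  have hGspan : G ∈ (Ideal.span H) ^ r :=
    ideal_pow_mono (iInf_le_spanH S) r hGIr
  have hkey : ∀ h ∈ H, ∃ d, h.IsHomogeneous d ∧
      (2 * q - 1 ≤ d ∨ ∀ k, coeff (Finsupp.single 1 k) h = 0) := by
    rintro h ⟨⟨d, hd⟩, hvan⟩
    refine ⟨d, hd, ?_⟩
    by_cases hcase : 2 * q - 1 ≤ d
    · exact Or.inl hcase
    · right
      have hvan' : ∀ v : Fin 3 → K', (v 0 ≠ 0 ∨ v 2 ≠ 0) →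
          eval (fun i => ((v i : K))) h = 0 := by
        intro v hv
        refine hvan _ ⟨?_, fun i => SetLike.coe_mem _, ?_⟩
        · intro hzero
          rcases hv with h0 | h2
          · exact h0 (by
              have := congrFun hzero 0
              simpa using Subtype.coe_injective (by simpa using this))
          · exact h2 (by
              have := congrFun hzero 2
              simpa using Subtype.coe_injective (by simpa using this))
        · rintro ⟨c, hc⟩
          have h0 : (v 0 : K) = 0 := by
            have := congrFun hc 0
            simpa [q0] using this
          have h2 : (v 2 : K) = 0 := by
            have := congrFun hc 2
            simpa [q0] using this
          rcases hv with hv0 | hv2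
          · exact hv0 (Subtype.coe_injective (by simpa using h0))
          · exact hv2 (Subtype.coe_injective (by simpa using h2))
      have hdle : d ≤ 2 * Fintype.card K' - 2 := by rw [hq]; omega
      have hdcoeff := key_vanish K' (by rw [hq]; exact hq3) hd hdle hvan'
      intro k
      rcases eq_or_ne k d with rfl | hkd
      · exact hdcoeff
      · exact coeff_single_ne hd hkd
  -- numerical inequality q² < r(2q-1)
  set u : ℕ := 2 * q - 1 with hu'
  have hu : u + 1 = 2 * q := by omega
  have hineq : q * q < r * u := by
    have m1 : (q + 1) * (u + 1) = 2 * (q * q) + 2 * q := by rw [hu]; ring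
    have m2 : (q + 1) * (u + 1) = (q + 1) * u + (q + 1) := by ring
    have m3 : 2 * (r * u) = (2 * r) * u := by ring
    rw [hr] at m3
    have m4 : (q + 1) * u = q * u + u := by ring
    have m5 : q * (u + 1) = q * u + q := by ring
    have m6 : q * (u + 1) = 2 * (q * q) := by rw [hu]; ring
    omega
  have hfinal := pow_coeff_zero H u hkey r G hGspan 1 (q * q) (by omega)
  rw [one_mul, hGcoeff] at hfinal
  exact one_ne_zero hfinal
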